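/- Let n ≥ 1 and K ≥ 1 be integers, let S ∈ ℂ^{n×n}, let ε > 0, and let E ∈ ℂ^{n×n} satisfy ‖E‖₂ ≤ ε; set Ŝ = S + E. Let h = (h_0,…,h_K) and ĥ = (ĥ_0,…,ĥ_K) be vectors in ℂ^{K+1} and set δ = ĥ − h. Assume R := ρ_ε(S) > 0 and let M = M(K,R). Then the spectral radius of the matrix Σ_{k=0}^K δ_k Ŝ^k (i.e. of H_ĥ(Ŝ) − H_h(Ŝ)) satisfies ρ(Σ_{k=0}^K δ_k Ŝ^k) ≤ max_{0≤i≤K} (M⁻¹ |δ|)_i, where |δ| denotes the vector (|δ_0|,…,|δ_K|) ∈ ℝ^{K+1}. -/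

import Mathlib

open scoped BigOperators
open Matrix

/-- Operator 2-norm (largest singular value) of a complex matrix. -/
noncomputable def opNorm {m n : ℕ} (A : Matrix (Fin m) (Fin n) ℂ) : ℝ :=
  ‖LinearMap.toContinuousLinearMap (Matrix.toEuclideanLin A)‖

/-- Euclidean norm of a complex vector. -/
noncomputable def vnorm {n : ℕ} (x : Fin n → ℂ) : ℝ :=
  ‖(WithLp.equiv 2 (Fin n → ℂ)).symm x‖

/-- Spectral radius: maximum modulus of the eigenvalues. -/
noncomputable def specRad {n : ℕ} (A : Matrix (Fin n) (Fin n) ℂ) : ℝ :=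
  sSup ((fun z : ℂ => ‖z‖) '' spectrum ℂ A)

/-- ε-pseudospectrum. -/
def pseudoSpec {n : ℕ} (ε : ℝ) (A : Matrix (Fin n) (Fin n) ℂ) : Set ℂ :=
  {z | ∃ E : Matrix (Fin n) (Fin n) ℂ, opNorm E ≤ ε ∧ z ∈ spectrum ℂ (A + E)}

/-- ε-pseudospectral radius. -/
noncomputable def pseudoSpecRad {n : ℕ} (ε : ℝ) (A : Matrix (Fin n) (Fin n) ℂ) : ℝ :=
  sSup ((fun z : ℂ => ‖z‖) '' pseudoSpec ε A)

/-- The Bernstein change-of-basis matrix M(K,R):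
`M_{i,j} = (−1)^{i−j} C(K,j) C(K−j, i−j) / R^i` for `j ≤ i`, and `0` otherwise. -/
noncomputable def Mmat (K : ℕ) (R : ℝ) : Matrix (Fin (K+1)) (Fin (K+1)) ℝ :=
  fun i j =>
    if (j : ℕ) ≤ (i : ℕ) then
      ((-1 : ℝ) ^ ((i : ℕ) - (j : ℕ)) * (K.choose j) *
        ((K - (j : ℕ)).choose ((i : ℕ) - (j : ℕ)))) / R ^ (i : ℕ)
    else 0

/-- Graph filter `H_h(S) = Σ_{k=0}^K h_k S^k`. -/
noncomputable def filt {n : ℕ} (K : ℕ) (h : ℕ → ℂ) (S : Matrix (Fin n) (Fin n) ℂ) :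
    Matrix (Fin n) (Fin n) ℂ :=
  ∑ k ∈ Finset.range (K+1), h k • S ^ k

/-- Vector of absolute values of the first K+1 coefficients. -/
noncomputable def absVec (K : ℕ) (h : ℕ → ℂ) : Fin (K+1) → ℝ := fun i => ‖h i‖

/-- The constant `M̄ = max_{0≤ℓ≤K} Σ_{k=ℓ}^K |h_k| C(k,ℓ) ‖S‖₂^{k−ℓ}`. -/
noncomputable def Mbar {n : ℕ} (K : ℕ) (h : ℕ → ℂ) (S : Matrix (Fin n) (Fin n) ℂ) : ℝ :=
  ⨆ ℓ : Fin (K+1), ∑ k ∈ Finset.Icc (ℓ : ℕ) K,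
    ‖h k‖ * (k.choose ℓ) * opNorm S ^ (k - (ℓ : ℕ))

/-- Complex ReLU: `CReLU(x + iy) = max(x,0) + i max(y,0)`. -/
noncomputable def CReLU (z : ℂ) : ℂ := ⟨max z.re 0, max z.im 0⟩

/-- Entrywise complex ReLU on vectors. -/
noncomputable def CReLUv {n : ℕ} (x : Fin n → ℂ) : Fin n → ℂ := fun i => CReLU (x i)

open Finset

lemma Mmat_det_isUnit (K : ℕ) {R : ℝ} (hR : 0 < R) : IsUnit (Mmat K R).det := by
  have htri : (Mmat K R).BlockTriangular OrderDual.toDual := by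
    intro i j hij
    have h : ¬ ((j:ℕ) ≤ (i:ℕ)) := by
      simpa using (show (i:ℕ) < (j:ℕ) from hij)
    simp [Mmat, h]
  rw [Matrix.det_of_lowerTriangular _ htri, isUnit_iff_ne_zero]
  apply Finset.prod_ne_zero_iff.2
  intro i _
  have h1 : (K.choose i : ℝ) ≠ 0 := by
    have : 0 < K.choose i := Nat.choose_pos (by omega)
    positivity
  have h2 : (R : ℝ) ^ (i:ℕ) ≠ 0 := by positivity
  simp only [Mmat, le_refl, if_pos, Nat.sub_self, pow_zero, one_mul, Nat.choose_zero_right,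
    Nat.cast_one, mul_one, ne_eq, div_eq_zero_iff, not_or]
  exact ⟨h1, h2⟩

lemma Mmat_col (K : ℕ) {R : ℝ} (hR : 0 < R) (j : Fin (K+1)) (t : ℝ) :
    ∑ k : Fin (K+1), Mmat K R k j * t ^ (k:ℕ)
      = (K.choose j : ℝ) * (t/R)^(j:ℕ) * (1 - t/R)^(K - (j:ℕ)) := by
  set s := t / R with hs
  have hRne : (R:ℝ) ≠ 0 := hR.ne'
  have hts : ∀ k : Fin (K+1), Mmat K R k j * t ^ (k:ℕ)
      = (fun k : ℕ => if (j:ℕ) ≤ k then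
          (-1:ℝ)^(k-(j:ℕ)) * (K.choose j) * ((K-(j:ℕ)).choose (k-(j:ℕ))) * s^k
        else 0) (k:ℕ) := by
    intro k
    simp only [Mmat]
    split
    · rw [hs, div_pow]
      field_simp
    · simp
  rw [Finset.sum_congr rfl (fun k _ => hts k),
    Fin.sum_univ_eq_sum_range (fun k : ℕ => if (j:ℕ) ≤ k then
      (-1:ℝ)^(k-(j:ℕ)) * (K.choose j) * ((K-(j:ℕ)).choose (k-(j:ℕ))) * s^k else 0) (K+1)]
  obtain ⟨d, hd⟩ : ∃ d, K = (j:ℕ) + d := ⟨K - j, by omega⟩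
  have hKj : K - (j:ℕ) = d := by omega
  rw [show range (K + 1) = range ((j:ℕ) + (d+1)) from by congr 1; omega, Finset.sum_range_add]
  have hzero : ∑ k ∈ range (j:ℕ),
      (if (j:ℕ) ≤ k then (-1:ℝ)^(k-(j:ℕ)) * (K.choose j) * ((K-(j:ℕ)).choose (k-(j:ℕ))) * s^k else 0) = 0 := by
    apply Finset.sum_eq_zero
    intro k hk
    rw [if_neg]
    exact Nat.not_le.2 (Finset.mem_range.1 hk)
  rw [hzero, zero_add]
  have hterm : ∀ m ∈ range (d+1),
      (if (j:ℕ) ≤ (j:ℕ) + m then (-1:ℝ)^(((j:ℕ)+m)-(j:ℕ)) * (K.choose j) * ((K-(j:ℕ)).choose (((j:ℕ)+m)-(j:ℕ))) * s^((j:ℕ)+m) else 0)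
        = (K.choose j : ℝ) * s^(j:ℕ) * ((-s)^m * 1^(d-m) * (d.choose m)) := by
    intro m _
    rw [if_pos (Nat.le_add_right _ _)]
    simp only [Nat.add_sub_cancel_left, hKj, one_pow]
    rw [pow_add, neg_pow]
    ring
  rw [Finset.sum_congr rfl hterm, ← Finset.mul_sum, ← add_pow, hKj]
  ring_nf

lemma bern_bound (K : ℕ) {R : ℝ} (hR : 0 < R) (v : Fin (K+1) → ℝ)
    {t : ℝ} (ht0 : 0 ≤ t) (htR : t ≤ R) :
    ∑ k : Fin (K+1), v k * t ^ (k:ℕ) ≤ ⨆ i, ((Mmat K R)⁻¹ *ᵥ v) i := by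
  set c := (Mmat K R)⁻¹ *ᵥ v with hc
  have hMc : Mmat K R *ᵥ c = v := by
    rw [hc, Matrix.mulVec_mulVec, Matrix.mul_nonsing_inv _ (Mmat_det_isUnit K hR),
      Matrix.one_mulVec]
  set B := ⨆ i, c i with hB
  have hcB : ∀ j, c j ≤ B := fun j => le_ciSup (Set.Finite.bddAbove (Set.finite_range c)) j
  set s := t / R with hs
  have hs0 : 0 ≤ s := div_nonneg ht0 hR.le
  have hs1 : s ≤ 1 := (div_le_one hR).2 htR
  have hBernNN : ∀ j : Fin (K+1), 0 ≤ (K.choose j : ℝ) * s^(j:ℕ) * (1-s)^(K-(j:ℕ)) := by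
    intro j
    have := sub_nonneg.2 hs1
    positivity
  have hsumBern : ∑ j : Fin (K+1), (K.choose j : ℝ) * s^(j:ℕ) * (1-s)^(K-(j:ℕ)) = 1 := by
    rw [Fin.sum_univ_eq_sum_range (fun j : ℕ => (K.choose j : ℝ) * s^j * (1-s)^(K-j)) (K+1)]
    calc ∑ i ∈ range (K+1), (K.choose i : ℝ) * s^i * (1-s)^(K-i)
        = ∑ i ∈ range (K+1), s^i * (1-s)^(K-i) * (K.choose i : ℝ) := by
          apply Finset.sum_congr rfl; intro k _; ring
      _ = (s + (1-s))^K := (add_pow s (1-s) K).symm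
      _ = 1 := by norm_num
  calc ∑ k : Fin (K+1), v k * t ^ (k:ℕ)
      = ∑ k : Fin (K+1), (∑ j : Fin (K+1), Mmat K R k j * c j) * t ^ (k:ℕ) := by
        apply Finset.sum_congr rfl; intro k _
        rw [← hMc]; simp [Matrix.mulVec, dotProduct]
    _ = ∑ j : Fin (K+1), c j * (∑ k : Fin (K+1), Mmat K R k j * t ^ (k:ℕ)) := by
        simp_rw [Finset.sum_mul, Finset.mul_sum]
        rw [Finset.sum_comm]
        apply Finset.sum_congr rfl; intro j _
        apply Finset.sum_congr rfl; intro k _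
        ring
    _ = ∑ j : Fin (K+1), c j * ((K.choose j : ℝ) * s^(j:ℕ) * (1-s)^(K-(j:ℕ))) := by
        apply Finset.sum_congr rfl; intro j _
        rw [Mmat_col K hR j t]
    _ ≤ ∑ j : Fin (K+1), B * ((K.choose j : ℝ) * s^(j:ℕ) * (1-s)^(K-(j:ℕ))) := by
        apply Finset.sum_le_sum
        intro j _
        exact mul_le_mul_of_nonneg_right (hcB j) (hBernNN j)
    _ = B := by rw [← Finset.mul_sum, hsumBern, mul_one]

lemma opNorm_eq_clm {n : ℕ} (A : Matrix (Fin n) (Fin n) ℂ) :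
    opNorm A = ‖Matrix.toEuclideanCLM (𝕜 := ℂ) A‖ := by
  congr 1


lemma abs_spec_le_opNorm {n : ℕ} (hn : 1 ≤ n) (A : Matrix (Fin n) (Fin n) ℂ)
    {z : ℂ} (hz : z ∈ spectrum ℂ A) : ‖z‖ ≤ opNorm A := by
  haveI : Nonempty (Fin n) := ⟨⟨0, hn⟩⟩
  haveI : Nontrivial (EuclideanSpace ℂ (Fin n)) :=
    inferInstanceAs (Nontrivial (PiLp 2 fun _ : Fin n => ℂ))
  have h2 : z ∈ spectrum ℂ (Matrix.toEuclideanCLM (𝕜 := ℂ) A) := by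
    rwa [AlgEquiv.spectrum_eq (Matrix.toEuclideanCLM (𝕜 := ℂ) (n := Fin n)) A]
  rw [opNorm_eq_clm]
  exact spectrum.norm_le_norm_of_mem h2

lemma opNorm_add_le {n : ℕ} (A B : Matrix (Fin n) (Fin n) ℂ) :
    opNorm (A + B) ≤ opNorm A + opNorm B := by
  simp only [opNorm_eq_clm, map_add]
  exact norm_add_le _ _

lemma abs_le_pseudoSpecRad {n : ℕ} (hn : 1 ≤ n) (S : Matrix (Fin n) (Fin n) ℂ)
    {ε : ℝ} (E : Matrix (Fin n) (Fin n) ℂ) (hE : opNorm E ≤ ε)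
    {z : ℂ} (hz : z ∈ spectrum ℂ (S + E)) :
    ‖z‖ ≤ pseudoSpecRad ε S := by
  apply le_csSup
  · refine ⟨opNorm S + ε, ?_⟩
    rintro x ⟨w, ⟨E', hE', hw⟩, rfl⟩
    calc ‖w‖ ≤ opNorm (S + E') := abs_spec_le_opNorm hn _ hw
      _ ≤ opNorm S + opNorm E' := opNorm_add_le _ _
      _ ≤ opNorm S + ε := by linarith
  · exact ⟨z, ⟨E, hE, hz⟩, rfl⟩

/-- **Spectrum Bound Transfer Error.** -/
theorem stmt_0 {n K : ℕ} (hn : 1 ≤ n) (hK : 1 ≤ K)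
    (S : Matrix (Fin n) (Fin n) ℂ) (ε : ℝ) (hε : 0 < ε)
    (E : Matrix (Fin n) (Fin n) ℂ) (hE : opNorm E ≤ ε)
    (h hhat : ℕ → ℂ)
    (hR : 0 < pseudoSpecRad ε S) :
    specRad (filt K hhat (S + E) - filt K h (S + E)) ≤
      ⨆ i : Fin (K+1),
        ((Mmat K (pseudoSpecRad ε S))⁻¹ *ᵥ absVec K (fun k => hhat k - h k)) i := by
  haveI : Nonempty (Fin n) := ⟨⟨0, hn⟩⟩
  set R := pseudoSpecRad ε S with hRdef
  set δ : ℕ → ℂ := fun k => hhat k - h k with hδ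
  set v : Fin (K+1) → ℝ := absVec K δ with hv
  set Sh := S + E with hSh
  set p : Polynomial ℂ := ∑ k ∈ range (K+1), Polynomial.C (δ k) * Polynomial.X ^ k with hp
  have hfilt : filt K hhat Sh - filt K h Sh = Polynomial.aeval Sh p := by
    rw [hp, map_sum, filt, filt, ← Finset.sum_sub_distrib]
    apply Finset.sum_congr rfl
    intro k _
    rw [_root_.map_mul, Polynomial.aeval_C, map_pow, Polynomial.aeval_X, ← sub_smul,
      Algebra.smul_def]
  have hvnonneg : ∀ i : Fin (K+1), 0 ≤ v i := fun i => norm_nonneg _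
  have hRHS0 : 0 ≤ ⨆ i : Fin (K+1), ((Mmat K R)⁻¹ *ᵥ v) i := by
    refine le_trans ?_ (bern_bound K hR v le_rfl hR.le)
    apply Finset.sum_nonneg
    intro k _
    exact mul_nonneg (hvnonneg k) (pow_nonneg le_rfl _)
  rw [hfilt, specRad]
  apply Real.sSup_le _ hRHS0
  rintro x ⟨w, hw, rfl⟩
  rw [spectrum.map_polynomial_aeval_of_nonempty Sh p
    (spectrum.nonempty_of_isAlgClosed_of_finiteDimensional ℂ Sh)] at hw
  obtain ⟨lam, hlam, rfl⟩ := hw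
  have hlamR : ‖lam‖ ≤ R := abs_le_pseudoSpecRad hn S E hE hlam
  have hlam0 : (0:ℝ) ≤ ‖lam‖ := norm_nonneg _
  have heval : Polynomial.eval lam p = ∑ k ∈ range (K+1), δ k * lam ^ k := by
    rw [hp, Polynomial.eval_finset_sum]
    apply Finset.sum_congr rfl
    intro k _
    rw [Polynomial.eval_mul, Polynomial.eval_C, Polynomial.eval_pow, Polynomial.eval_X]
  calc ‖Polynomial.eval lam p‖
      ≤ ∑ k ∈ range (K+1), ‖δ k‖ * ‖lam‖ ^ k := by
        rw [heval]
        refine le_trans (norm_sum_le _ _) ?_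
        apply Finset.sum_le_sum
        intro k _
        rw [norm_mul, norm_pow]
    _ = ∑ k : Fin (K+1), v k * ‖lam‖ ^ (k:ℕ) := by
        exact (Fin.sum_univ_eq_sum_range (fun k : ℕ => ‖δ k‖ * ‖lam‖ ^ k) (K+1)).symm
    _ ≤ ⨆ i : Fin (K+1), ((Mmat K R)⁻¹ *ᵥ v) i := bern_bound K hR v hlam0 hlamR
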